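/- arXiv:1906.11613 — 3 statements merged into one kernel-verified Lean document; each statement's English description precedes it below -/
import Mathlib

section
/- (Mind2Mind convergence theorem) Let χ be a compact metric space (data space), M a compact metric space (latent feature space), Z a metric space (prior latent space). Let c₁ : χ → M (encoder), g₁ : M → χ (decoder), both locally Lipschitz, and let AE = g₁ ∘ c₁. Let P_D and P_D' be Borel probability measures on χ (source and target data distributions), and let P⁰_θ be a compactly supported Borel probability measure on M (the MindGAN generated distribution). Define P'_θ = g₁#P⁰_θ. Then there exist constants a, b ≥ 0 such that W(P_D', P'_θ) ≤ a·W(P_D, P_D') + W(P_D, AE#P_D) + b·W(c₁#P_D', P⁰_θ). -/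
open MeasureTheory ENNReal NNReal ProbabilityTheory Set

/-- The 1-Wasserstein distance, as the infimum over transference plans of the
expected (extended) distance. -/
noncomputable def wassersteinDist {X : Type*} [MeasurableSpace X] [PseudoEMetricSpace X]
    (μ ν : Measure X) : ℝ≥0∞ :=
  ⨅ γ ∈ {γ : Measure (X × X) | γ.map Prod.fst = μ ∧ γ.map Prod.snd = ν},
    ∫⁻ p, edist p.1 p.2 ∂γ

section Aux

/-- A locally Lipschitz map on a compact metric space is (globally) Lipschitz. -/
lemma LocallyLipschitz.exists_lipschitzWith_of_compact {X Y : Type*} [MetricSpace X]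
    [CompactSpace X] [MetricSpace Y] {f : X → Y} (hf : LocallyLipschitz f) :
    ∃ K : ℝ≥0, LipschitzWith K f := by
  have hcont := hf.continuous
  rcases isEmpty_or_nonempty X with hX | hX
  · exact ⟨1, LipschitzWith.of_dist_le_mul fun x => isEmptyElim x⟩
  choose K t ht hK using hf
  obtain ⟨s, hs⟩ := isCompact_univ.elim_finite_subcover (fun x => interior (t x))
      (fun x => isOpen_interior)
      (fun x _ => Set.mem_iUnion.2 ⟨x, mem_interior_iff_mem_nhds.2 (ht x)⟩)
  have hs' : (Set.univ : Set X) ⊆ ⋃ i : {x // x ∈ s}, interior (t i.1) := by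
    intro x hx
    obtain ⟨i, hi, hxi⟩ := Set.mem_iUnion₂.1 (hs hx)
    exact Set.mem_iUnion.2 ⟨⟨i, hi⟩, hxi⟩
  obtain ⟨δ, δpos, hδ⟩ := lebesgue_number_lemma_of_metric isCompact_univ
      (fun i : {x // x ∈ s} => isOpen_interior) hs'
  obtain ⟨C, hC⟩ := Metric.isBounded_iff.1 (isCompact_range hcont).isBounded
  have hC' : ∀ x y : X, dist (f x) (f y) ≤ C := fun x y => hC ⟨x, rfl⟩ ⟨y, rfl⟩
  have hC0 : 0 ≤ C := le_trans dist_nonneg (hC' hX.some hX.some)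
  refine ⟨s.sup K ⊔ Real.toNNReal (C / δ), LipschitzWith.of_dist_le_mul fun x y => ?_⟩
  rcases lt_or_ge (dist x y) δ with h | h
  · obtain ⟨i, hi⟩ := hδ x (Set.mem_univ x)
    have hx : x ∈ t i.1 := interior_subset (hi (Metric.mem_ball_self δpos))
    have hy : y ∈ t i.1 := interior_subset (hi (by rwa [Metric.mem_ball, dist_comm]))
    have h1 : dist (f x) (f y) ≤ K i.1 * dist x y :=
      (lipschitzOnWith_iff_dist_le_mul.1 (hK i.1)) x hx y hy
    refine h1.trans (mul_le_mul_of_nonneg_right ?_ dist_nonneg)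
    exact_mod_cast (Finset.le_sup i.2 : K i.1 ≤ s.sup K).trans le_sup_left
  · have h1 : dist (f x) (f y) ≤ (C / δ) * dist x y := by
      calc dist (f x) (f y) ≤ C := hC' x y
        _ = (C / δ) * δ := by field_simp
        _ ≤ (C / δ) * dist x y := mul_le_mul_of_nonneg_left h (div_nonneg hC0 δpos.le)
    refine h1.trans (mul_le_mul_of_nonneg_right ?_ dist_nonneg)
    calc (C / δ) = (Real.toNNReal (C / δ) : ℝ) := (Real.coe_toNNReal _ (div_nonneg hC0 δpos.le)).symm
      _ ≤ ((s.sup K ⊔ Real.toNNReal (C / δ) : ℝ≥0) : ℝ) := by exact_mod_cast le_sup_right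

variable {X : Type*} [MeasurableSpace X] [PseudoEMetricSpace X]

lemma wassersteinDist_le_lintegral {μ ν : Measure X} {γ : Measure (X × X)}
    (h1 : γ.map Prod.fst = μ) (h2 : γ.map Prod.snd = ν) :
    wassersteinDist μ ν ≤ ∫⁻ p, edist p.1 p.2 ∂γ :=
  iInf₂_le γ ⟨h1, h2⟩

lemma coupling_prod (μ ν : Measure X) [IsProbabilityMeasure μ] [IsProbabilityMeasure ν] :
    (μ.prod ν).map Prod.fst = μ ∧ (μ.prod ν).map Prod.snd = ν :=
  ⟨Measure.fst_prod, Measure.snd_prod⟩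

lemma isProbabilityMeasure_of_fst {μ : Measure X} [IsProbabilityMeasure μ]
    {γ : Measure (X × X)} (h : γ.map Prod.fst = μ) : IsProbabilityMeasure γ := by
  constructor
  have := congrArg (fun m : Measure X => m Set.univ) h
  simpa [Measure.map_apply measurable_fst MeasurableSet.univ] using this

end Aux

section Metric

variable {X : Type*} [MeasurableSpace X] [MetricSpace X] [BorelSpace X]
  [SecondCountableTopology X]

lemma wassersteinDist_symm_le (μ ν : Measure X) :
    wassersteinDist μ ν ≤ wassersteinDist ν μ := by
  refine le_iInf₂ fun γ hγ => ?_
  refine le_trans (wassersteinDist_le_lintegral (γ := γ.map Prod.swap) ?_ ?_) ?_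
  · rw [Measure.map_map measurable_fst measurable_swap]; exact hγ.2
  · rw [Measure.map_map measurable_snd measurable_swap]; exact hγ.1
  · rw [lintegral_map (measurable_fst.edist measurable_snd) measurable_swap]
    refine le_of_eq (lintegral_congr fun p => ?_)
    exact edist_comm _ _

lemma wassersteinDist_map_le {Y : Type*} [MeasurableSpace Y] [MetricSpace Y] [BorelSpace Y]
    [SecondCountableTopology Y] {K : ℝ≥0} {f : X → Y} (hf : LipschitzWith K f)
    (μ ν : Measure X) [IsProbabilityMeasure μ] [IsProbabilityMeasure ν] :
    wassersteinDist (μ.map f) (ν.map f) ≤ K * wassersteinDist μ ν := by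
  have hfm : Measurable f := hf.continuous.measurable
  have key : ∀ γ : Measure (X × X), γ.map Prod.fst = μ → γ.map Prod.snd = ν →
      wassersteinDist (μ.map f) (ν.map f) ≤ K * ∫⁻ p, edist p.1 p.2 ∂γ := by
    intro γ h1 h2
    refine le_trans (wassersteinDist_le_lintegral (γ := γ.map (Prod.map f f)) ?_ ?_) ?_
    · rw [Measure.map_map measurable_fst (hfm.prodMap hfm)]
      rw [show (Prod.fst ∘ Prod.map f f : X × X → Y) = f ∘ Prod.fst from rfl,
        ← Measure.map_map hfm measurable_fst, h1]
    · rw [Measure.map_map measurable_snd (hfm.prodMap hfm)]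
      rw [show (Prod.snd ∘ Prod.map f f : X × X → Y) = f ∘ Prod.snd from rfl,
        ← Measure.map_map hfm measurable_snd, h2]
    · rw [lintegral_map (measurable_fst.edist measurable_snd) (hfm.prodMap hfm)]
      calc ∫⁻ p : X × X, edist (f p.1) (f p.2) ∂γ
          ≤ ∫⁻ p : X × X, (K : ℝ≥0∞) * edist p.1 p.2 ∂γ :=
            lintegral_mono fun p => hf p.1 p.2
        _ = K * ∫⁻ p, edist p.1 p.2 ∂γ :=
            lintegral_const_mul _ (measurable_fst.edist measurable_snd)
  haveI : Nonempty {γ : Measure (X × X) // γ.map Prod.fst = μ ∧ γ.map Prod.snd = ν} :=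
    ⟨⟨μ.prod ν, coupling_prod μ ν⟩⟩
  have hW : wassersteinDist μ ν
      = ⨅ γ : {γ : Measure (X × X) // γ.map Prod.fst = μ ∧ γ.map Prod.snd = ν},
          ∫⁻ p, edist p.1 p.2 ∂γ.1 := by
    rw [wassersteinDist, iInf_subtype]
    rfl
  rw [hW, ENNReal.mul_iInf (fun h => absurd h coe_ne_top)]
  exact le_iInf fun γ => key γ.1 γ.2.1 γ.2.2

lemma glue_couplings [PolishSpace X] [Nonempty X]
    {μ ρ ν : Measure X} [IsProbabilityMeasure μ] [IsProbabilityMeasure ρ] [IsProbabilityMeasure ν]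
    {γ₁ γ₂ : Measure (X × X)}
    (h11 : γ₁.map Prod.fst = μ) (h12 : γ₁.map Prod.snd = ρ)
    (h21 : γ₂.map Prod.fst = ρ) (h22 : γ₂.map Prod.snd = ν) :
    ∃ γ : Measure (X × X), γ.map Prod.fst = μ ∧ γ.map Prod.snd = ν ∧
      ∫⁻ p, edist p.1 p.2 ∂γ ≤ ∫⁻ p, edist p.1 p.2 ∂γ₁ + ∫⁻ p, edist p.1 p.2 ∂γ₂ := by
  haveI : IsProbabilityMeasure γ₁ := isProbabilityMeasure_of_fst h11
  haveI : IsProbabilityMeasure γ₂ := isProbabilityMeasure_of_fst h21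
  set σ : Measure (X × X) := γ₁.map Prod.swap with hσ
  haveI : IsProbabilityMeasure σ := Measure.isProbabilityMeasure_map measurable_swap.aemeasurable
  have hσfst : σ.fst = ρ := by
    rw [hσ, Measure.fst, Measure.map_map measurable_fst measurable_swap]; exact h12
  have hσsnd : σ.map Prod.snd = μ := by
    rw [hσ, Measure.map_map measurable_snd measurable_swap]; exact h11
  have hγ₂fst : γ₂.fst = ρ := by rw [Measure.fst]; exact h21
  set κ₁ := σ.condKernel with hκ₁
  set κ₂ := γ₂.condKernel with hκ₂
  have hd1 : ρ ⊗ₘ κ₁ = σ := by rw [← hσfst]; exact σ.disintegrate κ₁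
  have hd2 : ρ ⊗ₘ κ₂ = γ₂ := by rw [← hγ₂fst]; exact γ₂.disintegrate κ₂
  set τ : Measure (X × (X × X)) := ρ ⊗ₘ (κ₁ ×ₖ κ₂) with hτ
  refine ⟨τ.map Prod.snd, ?_, ?_, ?_⟩
  · -- first marginal is μ
    rw [Measure.map_map measurable_fst measurable_snd]
    ext s hs
    rw [Measure.map_apply (measurable_fst.comp measurable_snd) hs, hτ,
      Measure.compProd_apply ((measurable_fst.comp measurable_snd) hs)]
    have : ∀ a : X, (κ₁ ×ₖ κ₂) a (Prod.mk a ⁻¹' ((Prod.fst ∘ Prod.snd) ⁻¹' s)) = κ₁ a s := by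
      intro a
      have : Prod.mk a ⁻¹' ((Prod.fst ∘ Prod.snd : X × (X × X) → X) ⁻¹' s) = s ×ˢ Set.univ := by
        ext q; simp
      rw [this, Kernel.prod_apply, Measure.prod_prod, measure_univ, mul_one]
    simp_rw [this]
    have := congrArg (fun m : Measure X => m s) hσsnd
    rw [← this, ← hd1, Measure.map_apply measurable_snd hs,
      Measure.compProd_apply (measurable_snd hs)]
    rfl
  · -- second marginal is ν
    rw [Measure.map_map measurable_snd measurable_snd]
    ext s hs
    rw [Measure.map_apply (measurable_snd.comp measurable_snd) hs, hτ,
      Measure.compProd_apply ((measurable_snd.comp measurable_snd) hs)]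
    have : ∀ a : X, (κ₁ ×ₖ κ₂) a (Prod.mk a ⁻¹' ((Prod.snd ∘ Prod.snd) ⁻¹' s)) = κ₂ a s := by
      intro a
      have : Prod.mk a ⁻¹' ((Prod.snd ∘ Prod.snd : X × (X × X) → X) ⁻¹' s) = Set.univ ×ˢ s := by
        ext q; simp
      rw [this, Kernel.prod_apply, Measure.prod_prod, measure_univ, one_mul]
    simp_rw [this]
    have := congrArg (fun m : Measure X => m s) h22
    rw [← this, ← hd2, Measure.map_apply measurable_snd hs,
      Measure.compProd_apply (measurable_snd hs)]
    rfl
  · -- integral bound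
    have hm1 : Measurable fun p : X × (X × X) => edist p.2.1 p.1 :=
      (measurable_fst.comp measurable_snd).edist measurable_fst
    have hm2 : Measurable fun p : X × (X × X) => edist p.1 p.2.2 :=
      measurable_fst.edist (measurable_snd.comp measurable_snd)
    calc ∫⁻ p, edist p.1 p.2 ∂(τ.map Prod.snd)
        = ∫⁻ p : X × (X × X), edist p.2.1 p.2.2 ∂τ :=
          lintegral_map (measurable_fst.edist measurable_snd) measurable_snd
      _ ≤ ∫⁻ p : X × (X × X), (edist p.2.1 p.1 + edist p.1 p.2.2) ∂τ :=
          lintegral_mono fun p => edist_triangle _ _ _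
      _ = (∫⁻ p : X × (X × X), edist p.2.1 p.1 ∂τ)
          + ∫⁻ p : X × (X × X), edist p.1 p.2.2 ∂τ := lintegral_add_left hm1 _
      _ = (∫⁻ p, edist p.1 p.2 ∂γ₁) + ∫⁻ p, edist p.1 p.2 ∂γ₂ := by
          congr 1
          · rw [hτ, Measure.lintegral_compProd hm1]
            have : ∀ a : X, ∫⁻ q : X × X, edist q.1 a ∂(κ₁ ×ₖ κ₂) a
                = ∫⁻ b, edist b a ∂κ₁ a := by
              intro a
              rw [Kernel.lintegral_prod _ _ _ (measurable_fst.edist measurable_const)]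
              simp [lintegral_const]
            simp_rw [this]
            have : ∫⁻ p : X × X, edist p.2 p.1 ∂(ρ ⊗ₘ κ₁)
                = ∫⁻ a, ∫⁻ b, edist b a ∂κ₁ a ∂ρ :=
              Measure.lintegral_compProd (measurable_snd.edist measurable_fst)
            rw [← this, hd1, hσ, lintegral_map (measurable_snd.edist measurable_fst)
              measurable_swap]
            rfl
          · rw [hτ, Measure.lintegral_compProd hm2]
            have : ∀ a : X, ∫⁻ q : X × X, edist a q.2 ∂(κ₁ ×ₖ κ₂) a
                = ∫⁻ c, edist a c ∂κ₂ a := by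
              intro a
              rw [Kernel.lintegral_prod _ _ _ (measurable_const.edist measurable_snd)]
              simp [lintegral_const]
            simp_rw [this]
            have : ∫⁻ p : X × X, edist p.1 p.2 ∂(ρ ⊗ₘ κ₂)
                = ∫⁻ a, ∫⁻ c, edist a c ∂κ₂ a ∂ρ :=
              Measure.lintegral_compProd (measurable_fst.edist measurable_snd)
            rw [← this, hd2]

lemma wassersteinDist_triangle [PolishSpace X]
    (μ ρ ν : Measure X) [IsProbabilityMeasure μ] [IsProbabilityMeasure ρ]
    [IsProbabilityMeasure ν] :
    wassersteinDist μ ν ≤ wassersteinDist μ ρ + wassersteinDist ρ ν := by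
  rcases isEmpty_or_nonempty X with hX | hX
  · exfalso
    have := measure_univ (μ := μ)
    rw [Set.univ_eq_empty_iff.2 (by infer_instance : IsEmpty X)] at this
    simp at this
  refine ENNReal.le_of_forall_pos_le_add fun ε hε hfin => ?_
  have h₁ : wassersteinDist μ ρ ≠ ∞ := (lt_of_le_of_lt le_self_add hfin).ne
  have h₂ : wassersteinDist ρ ν ≠ ∞ := (lt_of_le_of_lt le_add_self hfin).ne
  have hε2 : (ε : ℝ≥0∞) / 2 ≠ 0 := by
    simp [ENNReal.div_eq_zero_iff, hε.ne']
  have hlt₁ : wassersteinDist μ ρ < wassersteinDist μ ρ + ε / 2 :=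
    ENNReal.lt_add_right h₁ hε2
  have hlt₂ : wassersteinDist ρ ν < wassersteinDist ρ ν + ε / 2 :=
    ENNReal.lt_add_right h₂ hε2
  rw [wassersteinDist] at hlt₁ hlt₂
  simp only [iInf_lt_iff, Set.mem_setOf_eq] at hlt₁ hlt₂
  obtain ⟨γ₁, ⟨h11, h12⟩, hI₁⟩ := hlt₁
  obtain ⟨γ₂, ⟨h21, h22⟩, hI₂⟩ := hlt₂
  obtain ⟨γ, hγ1, hγ2, hγI⟩ := glue_couplings h11 h12 h21 h22
  calc wassersteinDist μ ν ≤ ∫⁻ p, edist p.1 p.2 ∂γ := wassersteinDist_le_lintegral hγ1 hγ2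
    _ ≤ (∫⁻ p, edist p.1 p.2 ∂γ₁) + ∫⁻ p, edist p.1 p.2 ∂γ₂ := hγI
    _ ≤ (wassersteinDist μ ρ + ε / 2) + (wassersteinDist ρ ν + ε / 2) :=
        add_le_add hI₁.le hI₂.le
    _ = wassersteinDist μ ρ + wassersteinDist ρ ν + ε := by
        rw [add_add_add_comm, ENNReal.add_halves]

end Metric

/-- Mind2Mind convergence theorem. The Wasserstein error of the
transferred GAN is bounded by the domain shift, the autoencoder error and the
MindGAN error. -/
theorem mind2mind_convergence
    {χ M Z : Type*} [MetricSpace χ] [MeasurableSpace χ] [BorelSpace χ] [CompactSpace χ]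
    [MetricSpace M] [MeasurableSpace M] [BorelSpace M] [CompactSpace M]
    [MetricSpace Z]
    (c₁ : χ → M) (g₁ : M → χ) (hc₁ : LocallyLipschitz c₁) (hg₁ : LocallyLipschitz g₁)
    (PD PD' : Measure χ) [IsProbabilityMeasure PD] [IsProbabilityMeasure PD']
    (Pθ0 : Measure M) [IsProbabilityMeasure Pθ0]
    (hsupp : ∃ K : Set M, IsCompact K ∧ Pθ0 Kᶜ = 0) :
    ∃ a b : ℝ≥0,
      wassersteinDist PD' (Pθ0.map g₁)
        ≤ a * wassersteinDist PD PD'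
          + wassersteinDist PD (PD.map (g₁ ∘ c₁))
          + b * wassersteinDist (PD'.map c₁) Pθ0 := by
  obtain ⟨Kc, hKc⟩ := hc₁.exists_lipschitzWith_of_compact
  obtain ⟨Kg, hKg⟩ := hg₁.exists_lipschitzWith_of_compact
  have hAE : LipschitzWith (Kg * Kc) (g₁ ∘ c₁) := hKg.comp hKc
  have hcm : Measurable c₁ := hKc.continuous.measurable
  have hgm : Measurable g₁ := hKg.continuous.measurable
  haveI : IsProbabilityMeasure (Pθ0.map g₁) :=
    Measure.isProbabilityMeasure_map hgm.aemeasurable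
  haveI : IsProbabilityMeasure (PD.map (g₁ ∘ c₁)) :=
    Measure.isProbabilityMeasure_map (hgm.comp hcm).aemeasurable
  haveI : IsProbabilityMeasure (PD'.map (g₁ ∘ c₁)) :=
    Measure.isProbabilityMeasure_map (hgm.comp hcm).aemeasurable
  haveI : IsProbabilityMeasure (PD'.map c₁) :=
    Measure.isProbabilityMeasure_map hcm.aemeasurable
  refine ⟨1 + Kg * Kc, Kg, ?_⟩
  have hmapmap : PD'.map (g₁ ∘ c₁) = (PD'.map c₁).map g₁ :=
    (Measure.map_map hgm hcm).symm
  calc wassersteinDist PD' (Pθ0.map g₁)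
      ≤ wassersteinDist PD' PD + wassersteinDist PD (Pθ0.map g₁) :=
        wassersteinDist_triangle _ _ _
    _ ≤ wassersteinDist PD' PD + (wassersteinDist PD (PD.map (g₁ ∘ c₁))
        + wassersteinDist (PD.map (g₁ ∘ c₁)) (Pθ0.map g₁)) :=
        add_le_add_right (wassersteinDist_triangle _ _ _) _
    _ ≤ wassersteinDist PD' PD + (wassersteinDist PD (PD.map (g₁ ∘ c₁))
        + (wassersteinDist (PD.map (g₁ ∘ c₁)) (PD'.map (g₁ ∘ c₁))
          + wassersteinDist (PD'.map (g₁ ∘ c₁)) (Pθ0.map g₁))) := by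
        gcongr
        exact wassersteinDist_triangle _ _ _
    _ ≤ wassersteinDist PD PD' + (wassersteinDist PD (PD.map (g₁ ∘ c₁))
        + ((Kg * Kc : ℝ≥0) * wassersteinDist PD PD'
          + (Kg : ℝ≥0∞) * wassersteinDist (PD'.map c₁) Pθ0)) := by
        gcongr
        · exact wassersteinDist_symm_le _ _
        · exact wassersteinDist_map_le hAE PD PD'
        · rw [hmapmap]
          exact wassersteinDist_map_le hKg (PD'.map c₁) Pθ0
    _ = ((1 + Kg * Kc : ℝ≥0) : ℝ≥0∞) * wassersteinDist PD PD'
        + wassersteinDist PD (PD.map (g₁ ∘ c₁))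
        + (Kg : ℝ≥0∞) * wassersteinDist (PD'.map c₁) Pθ0 := by
        push_cast
        ring
end

section
/- (Kantorovich–Rubinstein special case used in WGAN) Let X be a compact metric space and μ, ν Borel probability measures on X. Then W(μ, ν) = sup over 1-Lipschitz functions f : X → ℝ of (∫ f dμ − ∫ f dν). -/
open MeasureTheory ENNReal NNReal

set_option linter.unusedSectionVars false
set_option linter.unusedVariables false
set_option maxHeartbeats 1000000

open List

section ListHelpers
variable {α : Type*} {β : Type*}

/-- our own count, to avoid BEq instance mismatches -/
def lcount [DecidableEq α] (a : α) : List α → ℕ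
  | [] => 0
  | b :: t => (if b = a then 1 else 0) + lcount a t

lemma lcount_nil [DecidableEq α] (a : α) : lcount a ([] : List α) = 0 := rfl

lemma lcount_cons [DecidableEq α] (a b : α) (t : List α) :
    lcount a (b :: t) = (if b = a then 1 else 0) + lcount a t := rfl

lemma lcount_append [DecidableEq α] (a : α) (l₁ l₂ : List α) :
    lcount a (l₁ ++ l₂) = lcount a l₁ + lcount a l₂ := by
  induction l₁ with
  | nil => simp [lcount]
  | cons b t ih => simp [lcount_cons, ih]; omega

lemma lcount_eq_zero_of_not_mem [DecidableEq α] {a : α} {l : List α} (h : a ∉ l) :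
    lcount a l = 0 := by
  induction l with
  | nil => rfl
  | cons b t ih =>
    simp only [List.mem_cons, not_or] at h
    rw [lcount_cons, if_neg (fun hba => h.1 hba.symm), ih h.2]

lemma mem_of_lcount_pos [DecidableEq α] {a : α} {l : List α} (h : 0 < lcount a l) :
    a ∈ l := by
  by_contra hc
  rw [lcount_eq_zero_of_not_mem hc] at h
  omega

lemma lcount_le_length [DecidableEq α] (a : α) (l : List α) : lcount a l ≤ l.length := by
  induction l with
  | nil => simp [lcount]
  | cons b t ih =>
    rw [lcount_cons]
    simp only [List.length_cons]
    split <;> omega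

lemma sum_map_eq_sum_lcount [DecidableEq α] [Fintype α] (f : α → ℝ) (P : List α) :
    (P.map f).sum = ∑ p : α, (lcount p P : ℝ) * f p := by
  induction P with
  | nil => simp [lcount]
  | cons b t ih =>
    simp only [List.map_cons, List.sum_cons, ih, lcount_cons]
    push_cast
    rw [Finset.sum_congr rfl (fun p _ => by ring :
      ∀ p ∈ Finset.univ, ((if b = p then (1:ℝ) else 0) + (lcount p t : ℝ)) * f p
        = (if b = p then (1:ℝ) else 0) * f p + (lcount p t : ℝ) * f p)]
    rw [Finset.sum_add_distrib]
    simp [Finset.sum_ite_eq]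

lemma lcount_map_fst [DecidableEq α] [DecidableEq β] [Fintype β]
    (P : List (α × β)) (v : α) :
    lcount v (P.map Prod.fst) = ∑ y : β, lcount (v, y) P := by
  induction P with
  | nil => simp [lcount]
  | cons p P ih =>
    rcases p with ⟨x, y0⟩
    simp only [List.map_cons, lcount_cons, ih]
    rw [Finset.sum_add_distrib]
    have : ∑ y : β, (if (x, y0) = (v, y) then 1 else 0)
        = (if x = v then 1 else 0 : ℕ) := by
      by_cases h : x = v
      · subst h; simp [Prod.ext_iff]
      · simp [Prod.ext_iff, h]
    omega

lemma lcount_map_snd [DecidableEq α] [DecidableEq β] [Fintype α]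
    (P : List (α × β)) (v : β) :
    lcount v (P.map Prod.snd) = ∑ x : α, lcount (x, v) P := by
  induction P with
  | nil => simp [lcount]
  | cons p P ih =>
    rcases p with ⟨x0, y⟩
    simp only [List.map_cons, lcount_cons, ih]
    rw [Finset.sum_add_distrib]
    have : ∑ x : α, (if (x0, y) = (x, v) then 1 else 0)
        = (if y = v then 1 else 0 : ℕ) := by
      by_cases h : y = v
      · subst h; simp [Prod.ext_iff]
      · simp [Prod.ext_iff, h]
    omega

lemma zip_tail_fst (l : List α) : (l.zip l.tail).map Prod.fst = l.dropLast := by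
  induction l with
  | nil => rfl
  | cons a t ih =>
    cases t with
    | nil => rfl
    | cons b t' =>
      simp only [List.tail_cons, List.zip_cons_cons, List.map_cons, List.dropLast_cons₂] at *
      rw [ih]

lemma zip_tail_snd (l : List α) : (l.zip l.tail).map Prod.snd = l.tail := by
  induction l with
  | nil => rfl
  | cons a t ih =>
    cases t with
    | nil => rfl
    | cons b t' =>
      simp only [List.tail_cons, List.zip_cons_cons, List.map_cons] at *
      rw [ih]

lemma chain'_zip (R : α → α → Prop) (l : List α) (h : l.Chain' R) :
    ∀ p ∈ l.zip l.tail, R p.1 p.2 := by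
  induction l with
  | nil => intro p hp; simp at hp
  | cons a t ih =>
    cases t with
    | nil => intro p hp; simp at hp
    | cons b t' =>
      intro p hp
      unfold List.Chain' at h; rw [List.isChain_cons_cons] at h
      simp only [List.tail_cons, List.zip_cons_cons, List.mem_cons] at hp
      rcases hp with rfl | hp
      · exact h.1
      · exact ih h.2 p hp

end ListHelpers


section Pot
variable {V : Type*} [Fintype V] [DecidableEq V]

/-- weight of a walk given arc weights -/
def wt2 (w : V → V → ℝ) : List V → ℝ
  | [] => 0
  | [_] => 0
  | a :: b :: t => w a b + wt2 w (b :: t)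

lemma wt2_cons_cons (w : V → V → ℝ) (a b : V) (t : List V) :
    wt2 w (a :: b :: t) = w a b + wt2 w (b :: t) := rfl

lemma wt2_append_cons (w : V → V → ℝ) (A : List V) (j : V) (B : List V) :
    wt2 w (A ++ j :: B) = wt2 w (A ++ [j]) + wt2 w (j :: B) := by
  induction A with
  | nil => simp [wt2]
  | cons a A ih =>
    cases A with
    | nil => simp [wt2, wt2_cons_cons]
    | cons a' A' =>
      simp only [cons_append, wt2_cons_cons] at *
      rw [ih]; ring

lemma wt2_concat (w : V → V → ℝ) (L : List V) (h : L ≠ []) (j : V) :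
    wt2 w (L ++ [j]) = wt2 w L + w (L.getLast h) j := by
  induction L with
  | nil => simp at h
  | cons a A ih =>
    cases A with
    | nil => simp [wt2]
    | cons a' A' =>
      show wt2 w (a :: a' :: (A' ++ [j])) = _
      rw [wt2_cons_cons, wt2_cons_cons]
      have : a' :: (A' ++ [j]) = (a' :: A') ++ [j] := by simp
      rw [this, ih (by simp)]
      simp [List.getLast_cons]
      ring

/-- nodup walk from s to t along arcs A -/
def IsNW (A : V → V → Prop) (s t : V) (L : List V) : Prop :=
  L.Nodup ∧ L.Chain' A ∧ L.head? = some s ∧ L.getLast? = some t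

lemma isNW_finite (A : V → V → Prop) (s t : V) : {L : List V | IsNW A s t L}.Finite := by
  apply Set.Finite.subset (List.finite_length_le V (Fintype.card V))
  intro L hL
  exact hL.1.length_le_card

/-- Existence of a feasible potential given no negative closed walks. -/
theorem pot_exists (A : V → V → Prop) (w : V → V → ℝ) (s : V)
    (hcyc : ∀ (a : V) (L : List V), List.Chain' A (a :: L ++ [a]) →
      0 ≤ wt2 w (a :: L ++ [a])) :
    ∃ φ : V → ℝ, ∀ x, (∃ L, IsNW A s x L) → ∀ y, A x y → φ y ≤ φ x + w x y := by
  set φ : V → ℝ := fun t => sInf (wt2 w '' {L | IsNW A s t L}) with hφ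
  refine ⟨φ, ?_⟩
  rintro x ⟨L₀, hL₀⟩ y hxy
  have hne : (wt2 w '' {L | IsNW A s x L}).Nonempty := ⟨_, ⟨L₀, hL₀, rfl⟩⟩
  have hfin : (wt2 w '' {L | IsNW A s x L}).Finite := (isNW_finite A s x).image _
  obtain ⟨L, hL, hwL⟩ := hne.csInf_mem hfin
  have hLne : L ≠ [] := by
    intro h; rw [h] at hL; simp [IsNW] at hL
  have hlast : L.getLast hLne = x := by
    have h2 := hL.2.2.2
    rw [List.getLast?_eq_getLast hLne, Option.some_inj] at h2
    exact h2
  have hφy_le : ∀ L', IsNW A s y L' → φ y ≤ wt2 w L' := fun L' hL' =>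
    csInf_le ((isNW_finite A s y).image _).bddBelow ⟨L', hL', rfl⟩
  have hwLx : wt2 w L = φ x := hwL
  by_cases hy : y ∈ L
  · obtain ⟨A', B, rfl⟩ := List.append_of_mem hy
    have hassoc : A' ++ y :: B = (A' ++ [y]) ++ B := by simp
    have hnodup2 : ((A' ++ [y]) ++ B).Nodup := by rw [← hassoc]; exact hL.1
    have hchain2 : ((A' ++ [y]) ++ B).Chain' A := by rw [← hassoc]; exact hL.2.1
    have hN1 : (A' ++ [y]).Nodup := hnodup2.of_append_left
    have hC1 : (A' ++ [y]).Chain' A := (List.isChain_append.mp hchain2).1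
    have hH1 : (A' ++ [y]).head? = some s := by
      have h0 := hL.2.2.1
      cases A' with
      | nil =>
        simp at h0 ⊢
        simpa using h0
      | cons a t => simpa using (by simpa using h0 : a = s)
    have hG1 : (A' ++ [y]).getLast? = some y := List.getLast?_concat
    have hBy : y ∉ B := by
      have := hnodup2
      rw [List.nodup_append] at this
      exact fun hmem => this.2.2 y (by simp) y hmem rfl
    -- weight split
    have hsplit : wt2 w (A' ++ y :: B) = wt2 w (A' ++ [y]) + wt2 w (y :: B) :=
      wt2_append_cons w A' y B
    -- the closed walk y :: B ++ [y] has nonneg weight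
    have hlastB : (y :: B).getLast (by simp) = x := by
      have h2 := hL.2.2.2
      have h3 : (y :: B).getLast? = some x := by
        rw [← List.getLast?_append_of_ne_nil A' (by simp : y :: B ≠ [])]
        exact h2
      rw [List.getLast?_eq_getLast (l := y :: B) (by simp), Option.some_inj] at h3
      exact h3
    have hCyB : (y :: B).Chain' A := by
      have := (List.isChain_append.mp hchain2).2.1
      cases B with
      | nil => simp [List.Chain']
      | cons b B'' =>
        refine List.isChain_cons.mpr ⟨?_, this⟩
        intro z hz
        have harc := (List.isChain_append.mp hchain2).2.2 y (by simp) z hz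
        exact harc
    have hCycle : (y :: B ++ [y]).Chain' A := by
      rw [show y :: B ++ [y] = (y :: B) ++ [y] by simp]
      refine List.isChain_append.mpr ⟨hCyB, by simp, ?_⟩
      intro p hp q hq
      simp only [List.head?_cons, Option.mem_def, Option.some.injEq] at hq
      subst hq
      rw [List.getLast?_eq_getLast (l := y :: B) (by simp), Option.mem_def, Option.some.injEq] at hp
      subst hp
      rw [hlastB]
      exact hxy
    have h0 := hcyc y B hCycle
    have hwc : wt2 w (y :: B ++ [y]) = wt2 w (y :: B) + w x y := by
      rw [show y :: B ++ [y] = (y :: B) ++ [y] by simp]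
      rw [wt2_concat w (y :: B) (by simp) y, hlastB]
    have key : φ y ≤ wt2 w (A' ++ [y]) := hφy_le _ ⟨hN1, hC1, hH1, hG1⟩
    have : wt2 w (A' ++ [y]) ≤ φ x + w x y := by
      rw [← hwLx, hsplit]
      have : 0 ≤ wt2 w (y :: B) + w x y := by rw [← hwc]; exact h0
      linarith
    linarith
  · -- y ∉ L : extend the walk
    have hN : (L ++ [y]).Nodup := by
      rw [List.nodup_append]
      refine ⟨hL.1, by simp, ?_⟩
      intro a ha b hb
      simp only [List.mem_singleton] at hb
      subst hb
      exact fun hab => hy (hab ▸ ha)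
    have hC : (L ++ [y]).Chain' A := by
      refine List.isChain_append.mpr ⟨hL.2.1, by simp, ?_⟩
      intro p hp q hq
      simp only [List.head?_cons, Option.mem_def, Option.some.injEq] at hq
      subst hq
      rw [List.getLast?_eq_getLast hLne, Option.mem_def, Option.some.injEq] at hp
      subst hp
      rw [hlast]
      exact hxy
    have hH : (L ++ [y]).head? = some s := by
      rw [List.head?_append]
      rw [hL.2.2.1]
      rfl
    have hG : (L ++ [y]).getLast? = some y := List.getLast?_concat
    have := hφy_le _ ⟨hN, hC, hH, hG⟩
    rw [wt2_concat w L hLne y, hlast, hwLx] at this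
    exact this

end Pot
section Pot2
variable {V : Type*}

lemma wt2_eq_zip (w : V → V → ℝ) (l : List V) :
    wt2 w l = ((l.zip l.tail).map fun p => w p.1 p.2).sum := by
  induction l with
  | nil => rfl
  | cons a t ih =>
    cases t with
    | nil => rfl
    | cons b t' =>
      show w a b + wt2 w (b :: t') = _
      simp only [List.tail_cons, List.zip_cons_cons, List.map_cons, List.sum_cons]
      rw [ih]
      rfl

end Pot2

section FiniteDual
variable {X : Type*} [MetricSpace X] {n : ℕ}

def Cpl (a b : Fin n → ℝ) : Set (Fin n → Fin n → ℝ) :=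
  {π | (∀ i j, 0 ≤ π i j) ∧ (∀ i, ∑ j, π i j = a i) ∧ (∀ j, ∑ i, π i j = b j)}

def fcost (z : Fin n → X) (π : Fin n → Fin n → ℝ) : ℝ :=
  ∑ i, ∑ j, π i j * dist (z i) (z j)

def Arc (π : Fin n → Fin n → ℝ) : (Fin n ⊕ Fin n) → (Fin n ⊕ Fin n) → Prop
  | .inl i, .inr j => 0 < π i j
  | .inr _, .inl _ => True
  | _, _ => False

def Wgt (z : Fin n → X) : (Fin n ⊕ Fin n) → (Fin n ⊕ Fin n) → ℝ
  | .inl i, .inr j => -dist (z i) (z j)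
  | .inr j, .inl i => dist (z i) (z j)
  | _, _ => 0

def chiDec {n : ℕ} (P : List ((Fin n ⊕ Fin n) × (Fin n ⊕ Fin n))) (i j : Fin n) : ℕ :=
  lcount (Sum.inl i, Sum.inr j) P

def chiInc {n : ℕ} (P : List ((Fin n ⊕ Fin n) × (Fin n ⊕ Fin n))) (i j : Fin n) : ℕ :=
  lcount (Sum.inr j, Sum.inl i) P

lemma no_neg_cycle (z : Fin n → X) (a b : Fin n → ℝ) (π : Fin n → Fin n → ℝ)
    (hπ : π ∈ Cpl a b) (hmin : IsMinOn (fcost z) (Cpl a b) π)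
    (v : Fin n ⊕ Fin n) (L : List (Fin n ⊕ Fin n))
    (hch : List.Chain' (Arc π) (v :: L ++ [v])) :
    0 ≤ wt2 (Wgt z) (v :: L ++ [v]) := by
  set Lc := v :: L ++ [v] with hLc
  set P := Lc.zip Lc.tail with hPdef
  have hP : ∀ p ∈ P, Arc π p.1 p.2 := chain'_zip _ _ hch
  have hz1 : ∀ i i', lcount (Sum.inl i, Sum.inl i') P = 0 := by
    intro i i'
    apply lcount_eq_zero_of_not_mem
    intro hmem
    simpa [Arc] using hP _ hmem
  have hz2 : ∀ j j', lcount (Sum.inr j, Sum.inr j') P = 0 := by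
    intro j j'
    apply lcount_eq_zero_of_not_mem
    intro hmem
    simpa [Arc] using hP _ hmem
  have hsupp : ∀ i j, 0 < chiDec P i j → 0 < π i j := by
    intro i j h
    have hmem := mem_of_lcount_pos h
    simpa [Arc] using hP _ hmem
  have hbal : ∀ x : Fin n ⊕ Fin n,
      lcount x (P.map Prod.fst) = lcount x (P.map Prod.snd) := by
    intro x
    rw [hPdef, zip_tail_fst, zip_tail_snd]
    have h1 : Lc.dropLast = v :: L := by
      rw [hLc, show v :: L ++ [v] = (v :: L) ++ [v] by simp, List.dropLast_concat]
    have h2 : Lc.tail = L ++ [v] := by rw [hLc]; rfl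
    rw [h1, h2, lcount_append, lcount_cons]
    simp [lcount_cons, lcount_nil]
    omega
  have hrow : ∀ i, (∑ j, (chiInc P i j : ℝ)) = ∑ j, (chiDec P i j : ℝ) := by
    intro i
    have e1 : ∑ j, chiDec P i j = lcount (Sum.inl i) (P.map Prod.fst) := by
      rw [lcount_map_fst, Fintype.sum_sum_type]
      simp [hz1, chiDec]
    have e2 : ∑ j, chiInc P i j = lcount (Sum.inl i) (P.map Prod.snd) := by
      rw [lcount_map_snd, Fintype.sum_sum_type]
      simp [hz1, chiInc]
    have h := hbal (Sum.inl i)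
    rw [← e1, ← e2] at h
    exact_mod_cast h.symm
  have hcol : ∀ j, (∑ i, (chiInc P i j : ℝ)) = ∑ i, (chiDec P i j : ℝ) := by
    intro j
    have e1 : ∑ i, chiInc P i j = lcount (Sum.inr j) (P.map Prod.fst) := by
      rw [lcount_map_fst, Fintype.sum_sum_type]
      simp [hz2, chiInc]
    have e2 : ∑ i, chiDec P i j = lcount (Sum.inr j) (P.map Prod.snd) := by
      rw [lcount_map_snd, Fintype.sum_sum_type]
      simp [hz2, chiDec]
    have h := hbal (Sum.inr j)
    rw [← e1, ← e2] at h
    exact_mod_cast h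
  have hwt : wt2 (Wgt z) Lc =
      (∑ i, ∑ j, (chiInc P i j : ℝ) * dist (z i) (z j))
        - ∑ i, ∑ j, (chiDec P i j : ℝ) * dist (z i) (z j) := by
    rw [wt2_eq_zip, ← hPdef, sum_map_eq_sum_lcount]
    rw [Fintype.sum_prod_type]
    simp only [Fintype.sum_sum_type]
    simp only [Wgt, hz1, hz2, Nat.cast_zero, zero_mul, mul_zero,
      Finset.sum_const_zero, zero_add, add_zero, mul_neg]
    rw [Finset.sum_comm (γ := Fin n)
      (f := fun (a₂ : Fin n) (a₁ : Fin n) =>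
        (lcount (Sum.inr a₂, Sum.inl a₁) P : ℝ) * dist (z a₁) (z a₂))]
    simp only [chiInc, chiDec, Finset.sum_neg_distrib]
    ring
  by_cases hS : ∀ i j, ¬ 0 < π i j
  · rw [wt2_eq_zip, ← hPdef]
    apply List.sum_nonneg
    intro x hx
    simp only [List.mem_map] at hx
    obtain ⟨p, hp, rfl⟩ := hx
    have harc := hP p hp
    obtain ⟨px, py⟩ := p
    rcases px with i | j <;> rcases py with i' | j'
    · simp [Arc] at harc
    · simp only [Arc] at harc
      exact absurd harc (hS _ _)
    · simp only [Wgt]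
      exact dist_nonneg
    · simp [Arc] at harc
  · push_neg at hS
    obtain ⟨i₀, j₀, hij₀⟩ := hS
    set S : Finset (Fin n × Fin n) := Finset.univ.filter (fun p => 0 < π p.1 p.2) with hSdef
    have hSne : S.Nonempty := ⟨(i₀, j₀), by simp [hSdef, hij₀]⟩
    set m₀ := S.inf' hSne (fun p => π p.1 p.2) with hm₀def
    have hm₀ : 0 < m₀ := by
      rw [hm₀def, Finset.lt_inf'_iff]
      intro p hp
      simpa [hSdef] using (Finset.mem_filter.mp hp).2
    set δ : ℝ := m₀ / (P.length + 1) with hδdef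
    have hδ : 0 < δ := div_pos hm₀ (by positivity)
    set π' : Fin n → Fin n → ℝ :=
      fun i j => π i j + δ * ((chiInc P i j : ℝ) - (chiDec P i j : ℝ)) with hπ'
    have hmem' : π' ∈ Cpl a b := by
      refine ⟨?_, ?_, ?_⟩
      · intro i j
        by_cases hd : chiDec P i j = 0
        · have h1 : (0:ℝ) ≤ (chiInc P i j : ℝ) - (chiDec P i j : ℝ) := by
            rw [hd]; simp
          exact add_nonneg (hπ.1 i j) (mul_nonneg hδ.le h1)
        · have h1 : 0 < π i j := hsupp i j (Nat.pos_of_ne_zero hd)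
          have h2 : m₀ ≤ π i j :=
            Finset.inf'_le (fun p => π p.1 p.2)
              (show ((i,j) : Fin n × Fin n) ∈ S by simp [hSdef, h1])
          have h3 : (chiDec P i j : ℝ) ≤ P.length := by
            exact_mod_cast lcount_le_length _ _
          have h6 : (0:ℝ) ≤ (chiInc P i j : ℝ) := by positivity
          have h4 : δ * ((chiDec P i j : ℝ) - chiInc P i j) ≤ δ * P.length := by
            apply mul_le_mul_of_nonneg_left _ hδ.le
            linarith
          have h5 : δ * (P.length : ℝ) < m₀ := by
            rw [hδdef, div_mul_eq_mul_div, div_lt_iff₀ (by positivity)]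
            nlinarith [hm₀]
          have heq : π' i j = π i j - δ * ((chiDec P i j : ℝ) - chiInc P i j) := by
            rw [hπ']; ring
          rw [heq]; linarith
      · intro i
        have heq : ∑ j, π' i j
            = (∑ j, π i j) + δ * ((∑ j, (chiInc P i j:ℝ)) - ∑ j, (chiDec P i j : ℝ)) := by
          rw [Finset.sum_add_distrib]
          congr 1
          rw [← Finset.mul_sum]
          congr 1
          rw [Finset.sum_sub_distrib]
        rw [heq, hrow i, hπ.2.1 i]; ring
      · intro j
        have heq : ∑ i, π' i j
            = (∑ i, π i j) + δ * ((∑ i, (chiInc P i j:ℝ)) - ∑ i, (chiDec P i j : ℝ)) := by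
          rw [Finset.sum_add_distrib]
          congr 1
          rw [← Finset.mul_sum]
          congr 1
          rw [Finset.sum_sub_distrib]
        rw [heq, hcol j, hπ.2.2 j]; ring
    have hcost : fcost z π' = fcost z π + δ * wt2 (Wgt z) Lc := by
      rw [hwt]
      unfold fcost
      rw [mul_sub, Finset.mul_sum, Finset.mul_sum, ← Finset.sum_sub_distrib,
        ← Finset.sum_add_distrib]
      apply Finset.sum_congr rfl
      intro i _
      rw [Finset.mul_sum, Finset.mul_sum, ← Finset.sum_sub_distrib, ← Finset.sum_add_distrib]
      apply Finset.sum_congr rfl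
      intro j _
      rw [hπ']; ring
    have hle := isMinOn_iff.mp hmin π' hmem'
    rw [hcost] at hle
    have h0 : 0 ≤ δ * wt2 (Wgt z) Lc := by linarith
    by_contra hneg
    push_neg at hneg
    nlinarith

end FiniteDual

section FiniteDual2
variable {X : Type*} [MetricSpace X] {n : ℕ}

lemma exists_min_coupling (z : Fin n → X) (a b : Fin n → ℝ)
    (ha : ∀ i, 0 ≤ a i) (hb : ∀ j, 0 ≤ b j)
    (hsa : ∑ i, a i = 1) (hsb : ∑ j, b j = 1) :
    ∃ π ∈ Cpl a b, IsMinOn (fcost z) (Cpl a b) π := by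
  have hne : (Cpl a b).Nonempty := by
    refine ⟨fun i j => a i * b j, fun i j => mul_nonneg (ha i) (hb j), fun i => ?_, fun j => ?_⟩
    · rw [← Finset.mul_sum, hsb, mul_one]
    · rw [← Finset.sum_mul, hsa, one_mul]
  have heval : ∀ (i j : Fin n), Continuous fun π : Fin n → Fin n → ℝ => π i j :=
    fun i j => (continuous_apply j).comp (continuous_apply i)
  have hclosed : IsClosed (Cpl a b) := by
    have hrep : Cpl a b = (⋂ i, ⋂ j, {π : Fin n → Fin n → ℝ | 0 ≤ π i j}) ∩
        ((⋂ i, {π : Fin n → Fin n → ℝ | ∑ j, π i j = a i}) ∩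
          ⋂ j, {π : Fin n → Fin n → ℝ | ∑ i, π i j = b j}) := by
      ext π
      simp only [Cpl, Set.mem_inter_iff, Set.mem_iInter, Set.mem_setOf_eq]
    rw [hrep]
    refine IsClosed.inter (isClosed_iInter fun i => isClosed_iInter fun j =>
      isClosed_le continuous_const (heval i j)) (IsClosed.inter ?_ ?_)
    · exact isClosed_iInter fun i =>
        isClosed_eq (continuous_finset_sum _ fun j _ => heval i j) continuous_const
    · exact isClosed_iInter fun j =>
        isClosed_eq (continuous_finset_sum _ fun i _ => heval i j) continuous_const
  have hbdd : Bornology.IsBounded (Cpl a b) := by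
    apply Bornology.IsBounded.subset (Metric.isBounded_closedBall (x := (0 : Fin n → Fin n → ℝ)) (r := 1))
    intro π hπ
    rw [Metric.mem_closedBall, dist_zero_right]
    rw [pi_norm_le_iff_of_nonneg zero_le_one]
    intro i
    rw [pi_norm_le_iff_of_nonneg zero_le_one]
    intro j
    rw [Real.norm_eq_abs, abs_le]
    constructor
    · linarith [hπ.1 i j]
    · have h1 : π i j ≤ a i := by
        rw [← hπ.2.1 i]
        exact Finset.single_le_sum (fun j' _ => hπ.1 i j') (Finset.mem_univ j)
      have h2 : a i ≤ 1 := by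
        rw [← hsa]
        exact Finset.single_le_sum (fun i' _ => ha i') (Finset.mem_univ i)
      linarith
  have hcost : Continuous (fcost z) :=
    continuous_finset_sum _ fun i _ => continuous_finset_sum _ fun j _ =>
      (heval i j).mul continuous_const
  obtain ⟨π, hmem, hmin⟩ :=
    (Metric.isCompact_of_isClosed_isBounded hclosed hbdd).exists_isMinOn hne
      hcost.continuousOn
  exact ⟨π, hmem, hmin⟩

theorem finite_dual (z : Fin n → X) (a b : Fin n → ℝ)
    (ha : ∀ i, 0 ≤ a i) (hb : ∀ j, 0 ≤ b j) (hsa : ∑ i, a i = 1) (hsb : ∑ j, b j = 1) :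
    ∃ π ∈ Cpl a b, ∃ f : X → ℝ, LipschitzWith 1 f ∧
      fcost z π ≤ (∑ i, a i * f (z i)) - ∑ j, b j * f (z j) := by
  obtain ⟨π, hπ, hmin⟩ := exists_min_coupling z a b ha hb hsa hsb
  obtain ⟨k₀, hk₀⟩ : ∃ k, 0 < b k := by
    by_contra h; push_neg at h
    have : ∑ j, b j ≤ 0 := Finset.sum_nonpos fun j _ => h j
    linarith
  obtain ⟨φ, hφ⟩ := pot_exists (Arc π) (Wgt z) (Sum.inr k₀)
    (fun aa LL hch => no_neg_cycle z a b π hπ hmin aa LL hch)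
  have reachL : ∀ i : Fin n, ∃ Lw, IsNW (Arc π) (Sum.inr k₀) (Sum.inl i) Lw := fun i =>
    ⟨[Sum.inr k₀, Sum.inl i], by simp [IsNW, List.Chain', List.isChain_pair, Arc]⟩
  have reachR : ∀ k : Fin n, 0 < b k →
      ∃ Lw, IsNW (Arc π) (Sum.inr k₀) (Sum.inr k) Lw := by
    intro k hk
    by_cases hkk : k = k₀
    · subst hkk; exact ⟨[Sum.inr k], by simp [IsNW, List.Chain']⟩
    · obtain ⟨i, hi⟩ : ∃ i, 0 < π i k := by
        by_contra h; push_neg at h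
        have h0 : ∑ i, π i k = 0 :=
          Finset.sum_eq_zero fun i _ => le_antisymm (h i) (hπ.1 i k)
        rw [hπ.2.2 k] at h0; linarith
      refine ⟨[Sum.inr k₀, Sum.inl i, Sum.inr k], ?_, ?_, rfl, rfl⟩
      · simp [hkk]
        exact fun h => hkk h.symm
      · unfold List.Chain'; rw [List.isChain_cons_cons, List.isChain_pair]
        exact ⟨by simp [Arc], by simpa [Arc] using hi⟩
  have con1 : ∀ i j, 0 < π i j → φ (Sum.inr j) ≤ φ (Sum.inl i) - dist (z i) (z j) := by
    intro i j hij
    have h := hφ (Sum.inl i) (reachL i) (Sum.inr j) (by simpa [Arc] using hij)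
    simp only [Wgt] at h
    linarith
  have con2 : ∀ (i k : Fin n), 0 < b k →
      φ (Sum.inl i) ≤ φ (Sum.inr k) + dist (z i) (z k) := by
    intro i k hk
    have h := hφ (Sum.inr k) (reachR k hk) (Sum.inl i) (by simp [Arc])
    simp only [Wgt] at h
    linarith
  classical
  set K : Finset (Fin n) := Finset.univ.filter (fun k => 0 < b k) with hK
  have hKne : K.Nonempty := ⟨k₀, by simp [hK, hk₀]⟩
  set f : X → ℝ := fun x => K.inf' hKne (fun k => dist x (z k) + φ (Sum.inr k)) with hf
  have key : ∀ x y : X, f x ≤ f y + dist x y := by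
    intro x y
    obtain ⟨k, hkK, hky⟩ := K.exists_mem_eq_inf' hKne
      (fun k => dist y (z k) + φ (Sum.inr k))
    have hfy : f y = dist y (z k) + φ (Sum.inr k) := hky
    calc f x ≤ dist x (z k) + φ (Sum.inr k) := Finset.inf'_le _ hkK
    _ ≤ (dist y (z k) + φ (Sum.inr k)) + dist x y := by
        have := dist_triangle x y (z k); linarith
    _ = f y + dist x y := by rw [hfy]
  have hflip : LipschitzWith 1 f := by
    apply LipschitzWith.of_dist_le_mul
    intro x y
    rw [NNReal.coe_one, one_mul, Real.dist_eq, abs_le]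
    constructor
    · linarith [key y x, dist_comm x y]
    · linarith [key x y]
  have hfkey1 : ∀ j, 0 < b j → f (z j) ≤ φ (Sum.inr j) := by
    intro j hj
    have h := Finset.inf'_le (fun k => dist (z j) (z k) + φ (Sum.inr k))
      (show j ∈ K by simp [hK, hj])
    simp only [dist_self, zero_add] at h
    exact h
  have hfkey2 : ∀ i, φ (Sum.inl i) ≤ f (z i) := by
    intro i
    apply Finset.le_inf'
    intro k hkK
    have hk : 0 < b k := by simpa [hK] using hkK
    have := con2 i k hk
    linarith
  refine ⟨π, hπ, f, hflip, ?_⟩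
  have h1 : ∑ i, a i * f (z i) = ∑ i, ∑ j, π i j * f (z i) := by
    refine Finset.sum_congr rfl fun i _ => ?_
    rw [← hπ.2.1 i, Finset.sum_mul]
  have h2 : ∑ j, b j * f (z j) = ∑ i, ∑ j, π i j * f (z j) := by
    rw [Finset.sum_comm]
    refine Finset.sum_congr rfl fun j _ => ?_
    rw [← hπ.2.2 j, Finset.sum_mul]
  rw [h1, h2, ← Finset.sum_sub_distrib]
  unfold fcost
  apply Finset.sum_le_sum
  intro i _
  rw [← Finset.sum_sub_distrib]
  apply Finset.sum_le_sum
  intro j _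
  rcases eq_or_lt_of_le (hπ.1 i j) with hz | hpos
  · rw [← hz]; simp
  · have hbj : 0 < b j := by
      rw [← hπ.2.2 j]
      exact lt_of_lt_of_le hpos
        (Finset.single_le_sum (fun i' _ => hπ.1 i' j) (Finset.mem_univ i))
    have hc1 := con1 i j hpos
    have h4 := hfkey1 j hbj
    have h5 := hfkey2 i
    have hd : dist (z i) (z j) ≤ f (z i) - f (z j) := by linarith
    calc π i j * dist (z i) (z j) ≤ π i j * (f (z i) - f (z j)) :=
      mul_le_mul_of_nonneg_left hd hpos.le
    _ = π i j * f (z i) - π i j * f (z j) := by ring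

end FiniteDual2

section Meas
variable {X : Type*} [MetricSpace X] [MeasurableSpace X] [BorelSpace X] [CompactSpace X]

lemma cont_int (ρ : Measure X) [IsFiniteMeasure ρ] (g : X → ℝ) (hg : Continuous g) :
    Integrable g ρ :=
  hg.integrable_of_hasCompactSupport
    (IsCompact.of_isClosed_subset isCompact_univ (isClosed_tsupport g) (Set.subset_univ _))

lemma exists_partition [Nonempty X] {ε : ℝ} (hε : 0 < ε) :
    ∃ (n : ℕ) (z : Fin n → X) (E : Fin n → Set X),
      (∀ i, MeasurableSet (E i)) ∧ Pairwise (Function.onFun _root_.Disjoint E) ∧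
      (⋃ i, E i) = Set.univ ∧ ∀ i, ∀ x ∈ E i, dist x (z i) ≤ ε := by
  classical
  obtain ⟨t, -, htf, hcov⟩ := finite_cover_balls_of_compact (isCompact_univ (X := X)) hε
  set l := htf.toFinset.toList with hl
  set n := l.length with hn
  set z : Fin n → X := fun i => l.get i with hz
  have hcover : ∀ x : X, ∃ i : Fin n, dist x (z i) < ε := by
    intro x
    have hx := hcov (Set.mem_univ x)
    simp only [Set.mem_iUnion] at hx
    obtain ⟨y, hyt, hxy⟩ := hx
    have hyl : y ∈ l := by
      rw [hl, Finset.mem_toList, Set.Finite.mem_toFinset]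
      exact hyt
    obtain ⟨i, hi⟩ := List.mem_iff_get.mp hyl
    exact ⟨i, by rw [hz]; simp only [hi]; exact Metric.mem_ball.mp hxy⟩
  refine ⟨n, z, fun i => Metric.ball (z i) ε \ ⋃ (j : Fin n) (_ : j < i), Metric.ball (z j) ε,
    ?_, ?_, ?_, ?_⟩
  · intro i
    exact measurableSet_ball.diff
      (MeasurableSet.iUnion fun j => MeasurableSet.iUnion fun _ => measurableSet_ball)
  · have key : ∀ i j : Fin n, i < j →
        _root_.Disjoint (Metric.ball (z i) ε \ ⋃ (k : Fin n) (_ : k < i), Metric.ball (z k) ε)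
          (Metric.ball (z j) ε \ ⋃ (k : Fin n) (_ : k < j), Metric.ball (z k) ε) := by
      intro i j hij
      rw [Set.disjoint_left]
      intro x hxi hxj
      have h1 : x ∈ Metric.ball (z i) ε := hxi.1
      have h2 : x ∉ ⋃ (k : Fin n) (_ : k < j), Metric.ball (z k) ε := hxj.2
      exact h2 (Set.mem_iUnion.mpr ⟨i, Set.mem_iUnion.mpr ⟨hij, h1⟩⟩)
    intro i j hij
    rcases lt_or_gt_of_ne hij with h | h
    · exact key i j h
    · exact (key j i h).symm
  · apply Set.eq_univ_of_forall
    intro x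
    have : (Finset.univ.filter (fun i : Fin n => x ∈ Metric.ball (z i) ε)).Nonempty := by
      obtain ⟨i, hi⟩ := hcover x
      exact ⟨i, by simp [Metric.mem_ball, hi]⟩
    set i₀ := this.choose with hi₀
    have hi₀mem := this.choose_spec
    rw [Set.mem_iUnion]
    -- use the least index instead
    obtain ⟨imin, himin, hleast⟩ :=
      (Finset.univ.filter (fun i : Fin n => x ∈ Metric.ball (z i) ε)).exists_min_image id this
    refine ⟨imin, ?_, ?_⟩
    · simpa using (Finset.mem_filter.mp himin).2
    · rw [Set.mem_iUnion]
      rintro ⟨j, hj⟩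
      rw [Set.mem_iUnion] at hj
      obtain ⟨hjlt, hjball⟩ := hj
      have : imin ≤ j := hleast j (by simp only [Finset.mem_filter]; exact ⟨Finset.mem_univ _, hjball⟩)
      exact absurd hjlt (not_lt.mpr this)
  · intro i x hx
    exact le_of_lt (Metric.mem_ball.mp hx.1)

lemma sum_approx {n : ℕ} (μ : Measure X) [IsProbabilityMeasure μ]
    (z : Fin n → X) (E : Fin n → Set X)
    (hEmeas : ∀ i, MeasurableSet (E i)) (hEdisj : Pairwise (Function.onFun _root_.Disjoint E))
    (hEcov : (⋃ i, E i) = Set.univ) {ε : ℝ} (hε : 0 < ε)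
    (hEdist : ∀ i, ∀ x ∈ E i, dist x (z i) ≤ ε)
    (f : X → ℝ) (hf : LipschitzWith 1 f) :
    |(∑ i, (μ (E i)).toReal * f (z i)) - ∫ x, f x ∂μ| ≤ ε := by
  have hμrep : μ = ∑ i, μ.restrict (E i) := by
    rw [← Measure.sum_fintype, ← Measure.restrict_iUnion hEdisj hEmeas, hEcov,
      Measure.restrict_univ]
  have hint : ∀ i, Integrable f (μ.restrict (E i)) :=
    fun i => (cont_int μ f hf.continuous).restrict
  have hsum1 : (∑ i, (μ (E i)).toReal) = 1 := by
    have h1 : ∑ i, μ (E i) = 1 := by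
      rw [← tsum_fintype (L := .unconditional _), ← measure_iUnion hEdisj hEmeas, hEcov, measure_univ]
    rw [← ENNReal.toReal_sum (fun i _ => measure_ne_top μ (E i))] at *
    rw [h1]; rfl
  have hi : ∫ x, f x ∂μ = ∑ i, ∫ x, f x ∂(μ.restrict (E i)) := by
    conv_lhs => rw [hμrep]
    exact integral_finset_sum_measure fun i _ => hint i
  rw [hi, ← Finset.sum_sub_distrib]
  calc |∑ i, ((μ (E i)).toReal * f (z i) - ∫ x, f x ∂(μ.restrict (E i)))|
      ≤ ∑ i, |(μ (E i)).toReal * f (z i) - ∫ x, f x ∂(μ.restrict (E i))| :=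
        Finset.abs_sum_le_sum_abs _ _
    _ ≤ ∑ i, ε * (μ (E i)).toReal := by
        apply Finset.sum_le_sum
        intro i _
        have hconst : (μ (E i)).toReal * f (z i) = ∫ _, f (z i) ∂(μ.restrict (E i)) := by
          rw [integral_const, measureReal_restrict_apply_univ, smul_eq_mul, measureReal_def]
        rw [hconst, ← integral_sub (integrable_const _) (hint i)]
        have hb : ∀ᵐ x ∂(μ.restrict (E i)), ‖f (z i) - f x‖ ≤ ε := by
          filter_upwards [ae_restrict_mem (hEmeas i)] with x hx
          have h1 : dist (f (z i)) (f x) ≤ dist (z i) x := by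
            have := hf.dist_le_mul (z i) x
            simpa using this
          rw [Real.norm_eq_abs, ← Real.dist_eq]
          calc dist (f (z i)) (f x) ≤ dist (z i) x := h1
          _ = dist x (z i) := dist_comm _ _
          _ ≤ ε := hEdist i x hx
        have := norm_integral_le_of_norm_le_const hb
        rwa [measureReal_restrict_apply_univ, measureReal_def] at this
    _ = ε := by rw [← Finset.mul_sum, hsum1, mul_one]

lemma easy_dir (μ ν : Measure X) [IsProbabilityMeasure μ] [IsProbabilityMeasure ν]
    (γ : Measure (X × X)) (h1 : γ.map Prod.fst = μ) (h2 : γ.map Prod.snd = ν)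
    (f : X → ℝ) (hf : LipschitzWith 1 f) :
    ENNReal.ofReal (∫ x, f x ∂μ - ∫ x, f x ∂ν) ≤ ∫⁻ p, edist p.1 p.2 ∂γ := by
  haveI : IsProbabilityMeasure γ := by
    constructor
    have h3 := congrArg (fun m : Measure X => m Set.univ) h1
    rw [Measure.map_apply measurable_fst MeasurableSet.univ, Set.preimage_univ] at h3
    rw [h3, measure_univ]
  have hfc : Continuous f := hf.continuous
  have int1 : Integrable (fun p : X × X => f p.1) γ :=
    cont_int γ _ (hfc.comp continuous_fst)
  have int2 : Integrable (fun p : X × X => f p.2) γ :=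
    cont_int γ _ (hfc.comp continuous_snd)
  have intd : Integrable (fun p : X × X => dist p.1 p.2) γ :=
    cont_int γ _ continuous_dist
  have e1 : ∫ x, f x ∂μ = ∫ p, f p.1 ∂γ := by
    rw [← h1, integral_map measurable_fst.aemeasurable]
    exact hfc.aestronglyMeasurable
  have e2 : ∫ x, f x ∂ν = ∫ p, f p.2 ∂γ := by
    rw [← h2, integral_map measurable_snd.aemeasurable]
    exact hfc.aestronglyMeasurable
  apply ENNReal.ofReal_le_of_le_toReal
  rw [e1, e2, ← integral_sub int1 int2]
  have step : ∫ p, (f p.1 - f p.2) ∂γ ≤ ∫ p, dist p.1 p.2 ∂γ := by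
    apply integral_mono (int1.sub int2) intd
    intro p
    have := hf.dist_le_mul p.1 p.2
    simp only [NNReal.coe_one, one_mul] at this
    calc f p.1 - f p.2 ≤ |f p.1 - f p.2| := le_abs_self _
    _ = dist (f p.1) (f p.2) := (Real.dist_eq _ _).symm
    _ ≤ dist p.1 p.2 := this
  have eq2 : ∫ p, dist p.1 p.2 ∂γ = (∫⁻ p, edist p.1 p.2 ∂γ).toReal := by
    rw [integral_eq_lintegral_of_nonneg_ae (ae_of_all _ fun p => dist_nonneg)
      continuous_dist.aestronglyMeasurable]
    congr 1
    apply lintegral_congr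
    intro p
    exact (edist_dist _ _).symm
  linarith
end Meas

section Approx
variable {X : Type*} [MetricSpace X] [MeasurableSpace X] [BorelSpace X] [CompactSpace X]

lemma approx (μ ν : Measure X) [IsProbabilityMeasure μ] [IsProbabilityMeasure ν]
    [Nonempty X] {ε : ℝ} (hε : 0 < ε) :
    ∃ γ : Measure (X × X), γ.map Prod.fst = μ ∧ γ.map Prod.snd = ν ∧
      ∃ g : X → ℝ, LipschitzWith 1 g ∧
        ∫⁻ p, edist p.1 p.2 ∂γ ≤ ENNReal.ofReal ((∫ x, g x ∂μ - ∫ x, g x ∂ν) + 4 * ε) := by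
  obtain ⟨n, z, E, hEmeas, hEdisj, hEcov, hEdist⟩ := exists_partition (X := X) hε
  set a : Fin n → ℝ := fun i => (μ (E i)).toReal with ha
  set b : Fin n → ℝ := fun j => (ν (E j)).toReal with hb
  have hsum : ∀ (ρ : Measure X) [IsProbabilityMeasure ρ], ∑ i, ρ (E i) = 1 := by
    intro ρ _
    rw [← tsum_fintype (L := .unconditional _), ← measure_iUnion hEdisj hEmeas, hEcov, measure_univ]
  have hsa : ∑ i, a i = 1 := by
    rw [ha, ← ENNReal.toReal_sum (fun i _ => measure_ne_top μ (E i)), hsum μ]; rfl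
  have hsb : ∑ j, b j = 1 := by
    rw [hb, ← ENNReal.toReal_sum (fun i _ => measure_ne_top ν (E i)), hsum ν]; rfl
  obtain ⟨π, hπ, f, hLip, hineq⟩ := finite_dual z a b (fun i => ENNReal.toReal_nonneg)
    (fun j => ENNReal.toReal_nonneg) hsa hsb
  set μc : Fin n → Measure X := fun i => (μ (E i))⁻¹ • μ.restrict (E i) with hμc
  set νc : Fin n → Measure X := fun j => (ν (E j))⁻¹ • ν.restrict (E j) with hνc
  have htot : ∀ (ρ : Measure X), IsFiniteMeasure ρ → ∀ s : Set X,
      ((ρ s)⁻¹ • ρ.restrict s) Set.univ ≤ 1 := by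
    intro ρ hρ s
    simp only [Measure.smul_apply, smul_eq_mul, Measure.restrict_apply_univ]
    rcases eq_or_ne (ρ s) 0 with h0 | h0
    · rw [h0, mul_zero]; exact zero_le_one
    · rw [ENNReal.inv_mul_cancel h0 (measure_ne_top _ _)]
  have htot1 : ∀ (ρ : Measure X), IsFiniteMeasure ρ → ∀ s : Set X, ρ s ≠ 0 →
      ((ρ s)⁻¹ • ρ.restrict s) Set.univ = 1 := by
    intro ρ hρ s h0
    simp only [Measure.smul_apply, smul_eq_mul, Measure.restrict_apply_univ]
    rw [ENNReal.inv_mul_cancel h0 (measure_ne_top _ _)]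
  have hπb : ∀ i j, ν (E j) = 0 → π i j = 0 := by
    intro i j h0
    have hbj : b j = 0 := by rw [hb]; simp [h0]
    have hsz : ∑ i', π i' j = 0 := by rw [hπ.2.2 j, hbj]
    exact (Finset.sum_eq_zero_iff_of_nonneg (fun i' _ => hπ.1 i' j)).mp hsz i
      (Finset.mem_univ i)
  have hπa : ∀ i j, μ (E i) = 0 → π i j = 0 := by
    intro i j h0
    have haj : a i = 0 := by rw [ha]; simp [h0]
    have hsz : ∑ j', π i j' = 0 := by rw [hπ.2.1 i, haj]
    exact (Finset.sum_eq_zero_iff_of_nonneg (fun j' _ => hπ.1 i j')).mp hsz j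
      (Finset.mem_univ j)
  set γ : Measure (X × X) := ∑ i, ∑ j, ENNReal.ofReal (π i j) • ((μc i).prod (νc j)) with hγ
  have hcancel : ∀ (ρ : Measure X), IsFiniteMeasure ρ → ∀ (i : Fin n) (s : Set X),
      ρ (E i) * ((ρ (E i))⁻¹ * ρ.restrict (E i) s) = ρ.restrict (E i) s := by
    intro ρ hρ i s
    rcases eq_or_ne (ρ (E i)) 0 with h0 | h0
    · have hr : ρ.restrict (E i) = 0 := Measure.restrict_eq_zero.mpr h0
      rw [h0, hr]; simp
    · rw [← mul_assoc, ENNReal.mul_inv_cancel h0 (measure_ne_top _ _), one_mul]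
  have hdecomp : ∀ (ρ : Measure X), IsProbabilityMeasure ρ → ∀ (s : Set X), MeasurableSet s →
      ∑ i, ρ.restrict (E i) s = ρ s := by
    intro ρ hρ s hs
    have h := Measure.restrict_iUnion (μ := ρ) hEdisj hEmeas
    rw [hEcov, Measure.restrict_univ] at h
    conv_rhs => rw [h]
    rw [Measure.sum_apply _ hs, tsum_fintype]
  have hfst : γ.map Prod.fst = μ := by
    apply Measure.ext
    intro s hs
    rw [Measure.map_apply measurable_fst hs]
    have hpre : Prod.fst ⁻¹' s = s ×ˢ (Set.univ : Set X) := (Set.prod_univ).symm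
    rw [hpre, hγ, Measure.finset_sum_apply]
    have hterm : ∀ i, (∑ j, ENNReal.ofReal (π i j) • ((μc i).prod (νc j))) (s ×ˢ Set.univ)
        = μ.restrict (E i) s := by
      intro i
      rw [Measure.finset_sum_apply]
      have hj : ∀ j, (ENNReal.ofReal (π i j) • ((μc i).prod (νc j))) (s ×ˢ Set.univ)
          = ENNReal.ofReal (π i j) * μc i s := by
        intro j
        rw [Measure.smul_apply, smul_eq_mul, Measure.prod_prod]
        rcases eq_or_ne (ν (E j)) 0 with h0 | h0
        · rw [hπb i j h0]; simp
        · rw [hνc]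
          rw [htot1 ν inferInstance (E j) h0, mul_one]
      rw [Finset.sum_congr rfl fun j _ => hj j, ← Finset.sum_mul,
        ← ENNReal.ofReal_sum_of_nonneg (fun j _ => hπ.1 i j), hπ.2.1 i, ha,
        ENNReal.ofReal_toReal (measure_ne_top μ (E i)), hμc]
      simp only [Measure.smul_apply, smul_eq_mul]
      exact hcancel μ inferInstance i s
    rw [Finset.sum_congr rfl fun i _ => hterm i]
    exact hdecomp μ inferInstance s hs
  have hsnd : γ.map Prod.snd = ν := by
    apply Measure.ext
    intro s hs
    rw [Measure.map_apply measurable_snd hs]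
    have hpre : Prod.snd ⁻¹' s = (Set.univ : Set X) ×ˢ s := (Set.univ_prod).symm
    rw [hpre, hγ, Measure.finset_sum_apply]
    have hterm : ∀ i j, (ENNReal.ofReal (π i j) • ((μc i).prod (νc j))) (Set.univ ×ˢ s)
        = ENNReal.ofReal (π i j) * νc j s := by
      intro i j
      rw [Measure.smul_apply, smul_eq_mul, Measure.prod_prod]
      rcases eq_or_ne (μ (E i)) 0 with h0 | h0
      · rw [hπa i j h0]; simp
      · rw [hμc]
        rw [htot1 μ inferInstance (E i) h0, one_mul]
    have hswap : ∑ i, (∑ j, ENNReal.ofReal (π i j) • ((μc i).prod (νc j))) (Set.univ ×ˢ s)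
        = ∑ j, ∑ i, ENNReal.ofReal (π i j) * νc j s := by
      rw [Finset.sum_congr rfl fun i _ => Measure.finset_sum_apply _ _ _]
      rw [Finset.sum_congr rfl fun i _ => Finset.sum_congr rfl fun j _ => hterm i j]
      exact Finset.sum_comm
    rw [hswap]
    have hcol : ∀ j, ∑ i, ENNReal.ofReal (π i j) * νc j s = ν.restrict (E j) s := by
      intro j
      rw [← Finset.sum_mul, ← ENNReal.ofReal_sum_of_nonneg (fun i _ => hπ.1 i j),
        hπ.2.2 j, hb, ENNReal.ofReal_toReal (measure_ne_top ν (E j)), hνc]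
      simp only [Measure.smul_apply, smul_eq_mul]
      exact hcancel ν inferInstance j s
    rw [Finset.sum_congr rfl fun j _ => hcol j]
    exact hdecomp ν inferInstance s hs
  have hcost : ∫⁻ p, edist p.1 p.2 ∂γ ≤ ENNReal.ofReal (fcost z π + 2 * ε) := by
    rw [hγ, lintegral_finset_sum_measure]
    have hterm : ∀ i,
        ∫⁻ p, edist p.1 p.2 ∂(∑ j, ENNReal.ofReal (π i j) • ((μc i).prod (νc j)))
        ≤ ∑ j, ENNReal.ofReal (π i j) * ENNReal.ofReal (dist (z i) (z j) + 2 * ε) := by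
      intro i
      rw [lintegral_finset_sum_measure]
      apply Finset.sum_le_sum
      intro j _
      rw [lintegral_smul_measure]
      apply mul_le_mul_right
      set ρ := (μc i).prod (νc j) with hρ
      have hz1 : μc i ((E i)ᶜ) = 0 := by
        rw [hμc]
        simp only [Measure.smul_apply, smul_eq_mul]
        rw [Measure.restrict_apply (hEmeas i).compl, Set.compl_inter_self, measure_empty,
          mul_zero]
      have hz2 : νc j ((E j)ᶜ) = 0 := by
        rw [hνc]
        simp only [Measure.smul_apply, smul_eq_mul]
        rw [Measure.restrict_apply (hEmeas j).compl, Set.compl_inter_self, measure_empty,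
          mul_zero]
      have hae : ∀ᵐ p ∂ρ, p.1 ∈ E i ∧ p.2 ∈ E j := by
        rw [ae_iff]
        apply measure_mono_null (t := ((E i)ᶜ ×ˢ (Set.univ : Set X)) ∪ ((Set.univ : Set X) ×ˢ (E j)ᶜ))
        · intro p hp
          simp only [Set.mem_setOf_eq, not_and_or] at hp
          rcases hp with h | h
          · exact Or.inl ⟨h, Set.mem_univ _⟩
          · exact Or.inr ⟨Set.mem_univ _, h⟩
        · apply _root_.le_antisymm _ zero_le
          calc ρ (((E i)ᶜ ×ˢ Set.univ) ∪ (Set.univ ×ˢ (E j)ᶜ))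
              ≤ ρ ((E i)ᶜ ×ˢ Set.univ) + ρ (Set.univ ×ˢ (E j)ᶜ) := measure_union_le _ _
          _ = 0 := by
              rw [hρ, Measure.prod_prod, Measure.prod_prod, hz1, hz2, zero_mul, mul_zero,
                add_zero]
      calc ∫⁻ p, edist p.1 p.2 ∂ρ
          ≤ ∫⁻ _, ENNReal.ofReal (dist (z i) (z j) + 2 * ε) ∂ρ := by
            apply lintegral_mono_ae
            filter_upwards [hae] with p hp
            rw [edist_dist]
            apply ENNReal.ofReal_le_ofReal
            calc dist p.1 p.2 ≤ dist p.1 (z i) + dist (z i) (z j) + dist (z j) p.2 :=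
              dist_triangle4 _ _ _ _
            _ ≤ ε + dist (z i) (z j) + ε := by
                have d1 := hEdist i p.1 hp.1
                have d2 := hEdist j p.2 hp.2
                have d3 : dist (z j) p.2 = dist p.2 (z j) := dist_comm _ _
                linarith
            _ = dist (z i) (z j) + 2 * ε := by ring
        _ = ENNReal.ofReal (dist (z i) (z j) + 2 * ε) * ρ Set.univ := lintegral_const _
        _ ≤ ENNReal.ofReal (dist (z i) (z j) + 2 * ε) * 1 := by
            apply mul_le_mul_right
            rw [hρ, ← Set.univ_prod_univ, Measure.prod_prod]
            exact mul_le_one' (htot μ inferInstance (E i)) (htot ν inferInstance (E j))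
        _ = ENNReal.ofReal (dist (z i) (z j) + 2 * ε) := mul_one _
    calc ∑ i, ∫⁻ p, edist p.1 p.2 ∂(∑ j, ENNReal.ofReal (π i j) • ((μc i).prod (νc j)))
        ≤ ∑ i, ∑ j, ENNReal.ofReal (π i j) * ENNReal.ofReal (dist (z i) (z j) + 2 * ε) :=
          Finset.sum_le_sum fun i _ => hterm i
    _ = ENNReal.ofReal (∑ i, ∑ j, π i j * (dist (z i) (z j) + 2 * ε)) := by
        rw [ENNReal.ofReal_sum_of_nonneg]
        · apply Finset.sum_congr rfl
          intro i _
          rw [ENNReal.ofReal_sum_of_nonneg]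
          · apply Finset.sum_congr rfl
            intro j _
            rw [ENNReal.ofReal_mul (hπ.1 i j)]
          · intro j _
            have := dist_nonneg (x := z i) (y := z j)
            have := hπ.1 i j
            nlinarith
        · intro i _
          apply Finset.sum_nonneg
          intro j _
          have := dist_nonneg (x := z i) (y := z j)
          have := hπ.1 i j
          nlinarith
    _ ≤ ENNReal.ofReal (fcost z π + 2 * ε) := by
        apply ENNReal.ofReal_le_ofReal
        have expand : ∑ i, ∑ j, π i j * (dist (z i) (z j) + 2 * ε)
            = fcost z π + 2 * ε * ∑ i, ∑ j, π i j := by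
          unfold fcost
          rw [Finset.mul_sum, ← Finset.sum_add_distrib]
          apply Finset.sum_congr rfl
          intro i _
          rw [Finset.mul_sum, ← Finset.sum_add_distrib]
          apply Finset.sum_congr rfl
          intro j _
          ring
        have hππ : ∑ i, ∑ j, π i j = 1 := by
          rw [Finset.sum_congr rfl fun i _ => hπ.2.1 i]
          exact hsa
        rw [expand, hππ, mul_one]
  have happrox1 := sum_approx μ z E hEmeas hEdisj hEcov hε hEdist f hLip
  have happrox2 := sum_approx ν z E hEmeas hEdisj hEcov hε hEdist f hLip
  refine ⟨γ, hfst, hsnd, f, hLip, ?_⟩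
  calc ∫⁻ p, edist p.1 p.2 ∂γ ≤ ENNReal.ofReal (fcost z π + 2 * ε) := hcost
  _ ≤ ENNReal.ofReal ((∫ x, f x ∂μ - ∫ x, f x ∂ν) + 4 * ε) := by
      apply ENNReal.ofReal_le_ofReal
      have hineq' : fcost z π ≤ (∑ i, (μ (E i)).toReal * f (z i))
          - ∑ j, (ν (E j)).toReal * f (z j) := by
        have := hineq
        simp only [ha, hb] at this
        convert this using 2
      have e1 := abs_le.mp happrox1
      have e2 := abs_le.mp happrox2
      linarith [hineq', e1.1, e1.2, e2.1, e2.2]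

end Approx

/-- Kantorovich–Rubinstein duality on a compact metric space. -/
theorem kantorovich_rubinstein
    {X : Type*} [MetricSpace X] [MeasurableSpace X] [BorelSpace X] [CompactSpace X]
    (μ ν : Measure X) [IsProbabilityMeasure μ] [IsProbabilityMeasure ν] :
    (wassersteinDist μ ν).toReal
      = ⨆ f : {f : X → ℝ // LipschitzWith 1 f},
          (∫ x, f.1 x ∂μ - ∫ x, f.1 x ∂ν) := by
  haveI hXne : Nonempty X := by
    rcases isEmpty_or_nonempty X with h | h
    · exfalso
      have h1 : μ Set.univ = 1 := measure_univ
      rw [Set.univ_eq_empty_iff.mpr h, measure_empty] at h1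
      exact zero_ne_one h1
    · exact h
  haveI : Nonempty {f : X → ℝ // LipschitzWith 1 f} :=
    ⟨⟨fun _ => 0, (LipschitzWith.const 0).weaken zero_le_one⟩⟩
  have hbdd : BddAbove (Set.range fun f : {f : X → ℝ // LipschitzWith 1 f} =>
      ∫ x, f.1 x ∂μ - ∫ x, f.1 x ∂ν) := by
    set x₀ : X := Classical.arbitrary X
    set C := Metric.diam (Set.univ : Set X) with hC
    refine ⟨2 * C, ?_⟩
    rintro r ⟨f, rfl⟩
    have key : ∀ (ρ : Measure X), IsProbabilityMeasure ρ → |∫ x, f.1 x ∂ρ - f.1 x₀| ≤ C := by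
      intro ρ hρ
      have hint := cont_int ρ f.1 f.2.continuous
      have heq : ∫ x, f.1 x ∂ρ - f.1 x₀ = ∫ x, (f.1 x - f.1 x₀) ∂ρ := by
        rw [integral_sub hint (integrable_const _), integral_const, probReal_univ]
        simp
      rw [heq]
      have hb : ∀ᵐ x ∂ρ, ‖f.1 x - f.1 x₀‖ ≤ C := by
        apply ae_of_all
        intro x
        rw [Real.norm_eq_abs, ← Real.dist_eq]
        calc dist (f.1 x) (f.1 x₀) ≤ dist x x₀ := by
              have := f.2.dist_le_mul x x₀
              simpa using this
        _ ≤ C := Metric.dist_le_diam_of_mem isCompact_univ.isBounded trivial trivial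
      have hni := norm_integral_le_of_norm_le_const hb
      rw [probReal_univ] at hni
      simpa using hni
    have k1 := abs_le.mp (key μ inferInstance)
    have k2 := abs_le.mp (key ν inferInstance)
    show (∫ x, f.1 x ∂μ - ∫ x, f.1 x ∂ν) ≤ 2 * C
    linarith [k1.1, k1.2, k2.1, k2.2]
  have hWle : ∀ (γ : Measure (X × X)), γ.map Prod.fst = μ → γ.map Prod.snd = ν →
      wassersteinDist μ ν ≤ ∫⁻ p, edist p.1 p.2 ∂γ := by
    intro γ hg1 hg2
    unfold wassersteinDist
    apply iInf_le_of_le γ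
    exact iInf_le_of_le ⟨hg1, hg2⟩ le_rfl
  have hWub : ∀ ε : ℝ, 0 < ε → (wassersteinDist μ ν).toReal
      ≤ (⨆ f : {f : X → ℝ // LipschitzWith 1 f}, (∫ x, f.1 x ∂μ - ∫ x, f.1 x ∂ν)) + ε := by
    intro ε hεp
    obtain ⟨γ, h1, h2, g, hg, hc⟩ := approx μ ν (show 0 < ε/4 by linarith)
    have hval : ∫ x, g x ∂μ - ∫ x, g x ∂ν
        ≤ ⨆ f : {f : X → ℝ // LipschitzWith 1 f}, (∫ x, f.1 x ∂μ - ∫ x, f.1 x ∂ν) :=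
      le_ciSup hbdd (⟨g, hg⟩ : {f : X → ℝ // LipschitzWith 1 f})
    have hW1 : wassersteinDist μ ν
        ≤ ENNReal.ofReal ((∫ x, g x ∂μ - ∫ x, g x ∂ν) + 4 * (ε/4)) :=
      le_trans (hWle γ h1 h2) hc
    have hS0 : 0 ≤ ⨆ f : {f : X → ℝ // LipschitzWith 1 f}, (∫ x, f.1 x ∂μ - ∫ x, f.1 x ∂ν) := by
      have h0 := le_ciSup hbdd (⟨fun _ => 0, (LipschitzWith.const 0).weaken zero_le_one⟩ :
        {f : X → ℝ // LipschitzWith 1 f})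
      simpa using h0
    calc (wassersteinDist μ ν).toReal
        ≤ (ENNReal.ofReal ((∫ x, g x ∂μ - ∫ x, g x ∂ν) + 4 * (ε/4))).toReal :=
          ENNReal.toReal_mono ENNReal.ofReal_ne_top hW1
    _ ≤ _ + ε := by
        rcases le_or_gt 0 ((∫ x, g x ∂μ - ∫ x, g x ∂ν) + 4 * (ε/4)) with hnn | hneg
        · rw [ENNReal.toReal_ofReal hnn]
          linarith
        · rw [ENNReal.ofReal_of_nonpos hneg.le, ENNReal.toReal_zero]
          linarith
  apply _root_.le_antisymm
  · exact _root_.le_of_forall_pos_le_add fun ε hε => hWub ε hε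
  · apply ciSup_le
    intro f
    have hWne : wassersteinDist μ ν ≠ ∞ := by
      obtain ⟨γ, h1, h2, g, hg, hc⟩ := approx μ ν one_pos
      exact ne_top_of_le_ne_top ENNReal.ofReal_ne_top (le_trans (hWle γ h1 h2) hc)
    have h2 : ENNReal.ofReal (∫ x, f.1 x ∂μ - ∫ x, f.1 x ∂ν) ≤ wassersteinDist μ ν := by
      unfold wassersteinDist
      apply le_iInf
      intro γ
      apply le_iInf
      intro hγ
      exact easy_dir μ ν γ hγ.1 hγ.2 f.1 f.2
    rcases le_or_gt (∫ x, f.1 x ∂μ - ∫ x, f.1 x ∂ν) 0 with hn | hp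
    · exact le_trans hn ENNReal.toReal_nonneg
    · have h3 := ENNReal.toReal_mono hWne h2
      rwa [ENNReal.toReal_ofReal hp.le] at h3
end

section
/- Let χ and M be compact metric spaces, c₁ : χ → M continuous, g₁ : M → χ Lipschitz with constant L. Let P and Q be Borel probability measures on χ. If g₁(c₁(x)) = x for all x ∈ support(P), then W(P, g₁#(c₁#Q)) ≤ (1 + L·Lip(c₁))·W(P, Q) whenever c₁ is Lipschitz with constant Lip(c₁). -/
open MeasureTheory ENNReal NNReal

/-- The support of a Borel measure. -/
def measureSupport {X : Type*} [TopologicalSpace X] [MeasurableSpace X]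
    (μ : Measure X) : Set X :=
  {x | ∀ U ∈ nhds x, μ U ≠ 0}

lemma isOpen_compl_measureSupport {X : Type*} [TopologicalSpace X] [MeasurableSpace X]
    (μ : Measure X) : IsOpen (measureSupport μ)ᶜ := by
  rw [isOpen_iff_mem_nhds]
  intro x hx
  simp only [Set.mem_compl_iff, measureSupport, Set.mem_setOf_eq, not_forall] at hx
  obtain ⟨U, hU, hU0⟩ := hx
  obtain ⟨V, hVU, hVopen, hxV⟩ := mem_nhds_iff.mp hU
  refine Filter.mem_of_superset (hVopen.mem_nhds hxV) ?_
  intro y hy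
  simp only [Set.mem_compl_iff, measureSupport, Set.mem_setOf_eq, not_forall]
  refine ⟨U, Filter.mem_of_superset (hVopen.mem_nhds hy) hVU, hU0⟩

lemma measure_compl_measureSupport {X : Type*} [TopologicalSpace X]
    [SecondCountableTopology X] [MeasurableSpace X] (μ : Measure X) :
    μ (measureSupport μ)ᶜ = 0 := by
  obtain ⟨B, hBc, -, hB⟩ := TopologicalSpace.exists_countable_basis X
  have hsub : (measureSupport μ)ᶜ ⊆ ⋃₀ {U ∈ B | μ U = 0} := by
    intro x hx
    simp only [Set.mem_compl_iff, measureSupport, Set.mem_setOf_eq, not_forall] at hx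
    obtain ⟨U, hU, hU0⟩ := hx
    push_neg at hU0
    obtain ⟨V, hVB, hxV, hVU⟩ := hB.mem_nhds_iff.mp hU
    exact ⟨V, ⟨hVB, le_antisymm (hU0 ▸ measure_mono hVU) zero_le⟩, hxV⟩
  refine measure_mono_null hsub (measure_sUnion_null_iff ?_ |>.mpr fun U hU => hU.2)
  exact hBc.mono (Set.sep_subset _ _)

/-- Ideal autoencoder case: if the autoencoder g₁ ∘ c₁ exactly
reconstructs the support of P, then the reconstruction error on Q is
controlled by the domain shift. -/
theorem ideal_autoencoder_shift
    {χ M : Type*} [MetricSpace χ] [MeasurableSpace χ] [BorelSpace χ] [CompactSpace χ]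
    [MetricSpace M] [MeasurableSpace M] [BorelSpace M] [CompactSpace M]
    (c₁ : χ → M) (g₁ : M → χ) (hc₁cont : Continuous c₁)
    (L K : ℝ≥0) (hg₁ : LipschitzWith L g₁) (hc₁ : LipschitzWith K c₁)
    (P Q : Measure χ) [IsProbabilityMeasure P] [IsProbabilityMeasure Q]
    (hrec : ∀ x ∈ measureSupport P, g₁ (c₁ x) = x) :
    wassersteinDist P ((Q.map c₁).map g₁)
      ≤ (1 + L * K) * wassersteinDist P Q := by
  set f : χ → χ := g₁ ∘ c₁ with hfdef
  have hfl : LipschitzWith (L * K) f := hg₁.comp hc₁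
  have hfm : Measurable f := hfl.continuous.measurable
  have hmap : (Q.map c₁).map g₁ = Q.map f :=
    Measure.map_map hg₁.continuous.measurable hc₁cont.measurable
  rw [hmap]
  have key : ∀ γ : Measure (χ × χ), γ.map Prod.fst = P → γ.map Prod.snd = Q →
      wassersteinDist P (Q.map f) ≤ (1 + (L : ℝ≥0∞) * K) * ∫⁻ p, edist p.1 p.2 ∂γ := by
    intro γ h1 h2
    have hmapm : Measurable (Prod.map (id : χ → χ) f) := measurable_id.prodMap hfm
    have hγ1 : (γ.map (Prod.map id f)).map Prod.fst = P := by
      rw [Measure.map_map measurable_fst hmapm]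
      exact h1
    have hγ2 : (γ.map (Prod.map id f)).map Prod.snd = Q.map f := by
      rw [Measure.map_map measurable_snd hmapm, ← h2, Measure.map_map hfm measurable_snd]
      rfl
    have hle : wassersteinDist P (Q.map f)
        ≤ ∫⁻ p, edist p.1 p.2 ∂(γ.map (Prod.map id f)) :=
      iInf₂_le _ ⟨hγ1, hγ2⟩
    refine hle.trans ?_
    rw [lintegral_map (by fun_prop) hmapm]
    have hae : ∀ᵐ p ∂γ, p.1 ∈ measureSupport P := by
      have h0 : γ (Prod.fst ⁻¹' (measureSupport P)ᶜ) = 0 := by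
        rw [← Measure.map_apply measurable_fst
          (isOpen_compl_measureSupport P).measurableSet, h1]
        exact measure_compl_measureSupport P
      exact measure_mono_null (fun p hp => hp) h0
    calc ∫⁻ p, edist (Prod.map id f p).1 (Prod.map id f p).2 ∂γ
        ≤ ∫⁻ p, (1 + (L : ℝ≥0∞) * K) * edist p.1 p.2 ∂γ := by
          refine lintegral_mono_ae ?_
          filter_upwards [hae] with p hp
          have hrp : f p.1 = p.1 := hrec p.1 hp
          calc edist (Prod.map id f p).1 (Prod.map id f p).2
              = edist (f p.1) (f p.2) := by simp [Prod.map, hrp]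
            _ ≤ (L * K : ℝ≥0) * edist p.1 p.2 := hfl.edist_le_mul p.1 p.2
            _ ≤ (1 + (L : ℝ≥0∞) * K) * edist p.1 p.2 := by
                push_cast
                gcongr
                exact le_add_self
      _ = (1 + (L : ℝ≥0∞) * K) * ∫⁻ p, edist p.1 p.2 ∂γ :=
          lintegral_const_mul _ (by fun_prop)
  have hW : wassersteinDist P (Q.map f)
      ≤ ⨅ γ ∈ {γ : Measure (χ × χ) | γ.map Prod.fst = P ∧ γ.map Prod.snd = Q},
        (1 + (L : ℝ≥0∞) * K) * ∫⁻ p, edist p.1 p.2 ∂γ :=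
    le_iInf₂ fun γ hγ => key γ hγ.1 hγ.2
  refine hW.trans_eq ?_
  rw [wassersteinDist]
  have hne : (1 + (L : ℝ≥0∞) * K) ≠ 0 := by simp [add_eq_zero]
  have hnt : (1 + (L : ℝ≥0∞) * K) ≠ ∞ := by
    simp [ENNReal.add_ne_top, ENNReal.mul_ne_top, ENNReal.coe_ne_top]
  rw [ENNReal.mul_iInf_of_ne hne hnt]
  exact iInf_congr fun γ => (ENNReal.mul_iInf_of_ne hne hnt).symm
end
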